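/- arXiv:1703.05512 — 6 statements merged into one kernel-verified Lean document; each statement's English description precedes it below -/
import Mathlib

section
/- Let A be a 3×3 integer matrix with determinant 1 whose characteristic polynomial has a real root α with α > 1 and a non-real complex root β. Then there is no rational number q such that β = α^{-1/2}·exp(√-1·qπ). Equivalently, for every positive integer N, the complex number β^N is not real. -/
open Polynomial

/-- Auxiliary integer sequence: power sums of the roots of `X^3 - T X^2 + S X - 1`. -/
def pseq (T S : ℤ) : ℕ → ℤ
  | 0 => 3
  | 1 => T
  | 2 => T ^ 2 - 2 * S
  | (n + 3) => T * pseq T S (n + 2) - S * pseq T S (n + 1) + pseq T S n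

lemma pseq_spec (T S : ℤ) (a b c : ℂ)
    (ha : a ^ 3 = T * a ^ 2 - S * a + 1)
    (hb : b ^ 3 = T * b ^ 2 - S * b + 1)
    (hc : c ^ 3 = T * c ^ 2 - S * c + 1)
    (h1 : a + b + c = T) (h2 : a * b + a * c + b * c = S) :
    ∀ n : ℕ, (pseq T S n : ℂ) = a ^ n + b ^ n + c ^ n
  | 0 => by norm_num [pseq]
  | 1 => by simp [pseq]; linear_combination -h1
  | 2 => by
      simp only [pseq]
      push_cast
      linear_combination (-(a + b + c) - (T : ℂ)) * h1 + 2 * h2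
  | (n + 3) => by
      have i0 := pseq_spec T S a b c ha hb hc h1 h2 n
      have i1 := pseq_spec T S a b c ha hb hc h1 h2 (n + 1)
      have i2 := pseq_spec T S a b c ha hb hc h1 h2 (n + 2)
      show ((T * pseq T S (n + 2) - S * pseq T S (n + 1) + pseq T S n : ℤ) : ℂ) = _
      push_cast [i0, i1, i2]
      linear_combination (-(a ^ n)) * ha + (-(b ^ n)) * hb + (-(c ^ n)) * hc

set_option maxHeartbeats 1600000 in
/-- Let `A` be a `3×3` integer matrix with determinant `1` whose characteristic polynomial
has a real root `α > 1` and a non-real complex root `β`. Then there is no rational `q`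
with `β = α^(-1/2) · exp(i q π)`; equivalently, `β ^ N` is non-real for every `N > 0`. -/
theorem stmt0 (A : Matrix (Fin 3) (Fin 3) ℤ) (hdet : A.det = 1)
    (α : ℝ) (hα : 1 < α) (hαroot : Polynomial.aeval α A.charpoly = 0)
    (β : ℂ) (hβroot : Polynomial.aeval β A.charpoly = 0) (hβ : β.im ≠ 0) :
    (∀ q : ℚ, β ≠ ((α ^ (-(1/2) : ℝ) : ℝ) : ℂ) * Complex.exp ((q : ℂ) * Real.pi * Complex.I))
    ∧ (∀ N : ℕ, 0 < N → (β ^ N).im ≠ 0) := by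
  set p := A.charpoly with hp
  have hmon : p.Monic := A.charpoly_monic
  have hdeg : p.natDegree = 3 := by
    show A.charpoly.natDegree = 3
    simp
  have hc0 : p.coeff 0 = -1 := by
    have h := A.det_eq_sign_charpoly_coeff
    rw [hdet] at h
    rw [← hp] at h
    norm_num [Fintype.card_fin] at h
    omega
  have hc3 : p.coeff 3 = 1 := by
    have h := hmon.coeff_natDegree; rwa [hdeg] at h
  set t : ℤ := -p.coeff 2 with ht
  set s : ℤ := p.coeff 1 with hs
  have hct : p.coeff 2 = -t := by rw [ht]; ring
  -- every complex root r of p satisfies the cubic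
  have key : ∀ r : ℂ, aeval r p = 0 → r ^ 3 = t * r ^ 2 - s * r + 1 := by
    intro r hr
    have h1 : (p.map (algebraMap ℤ ℂ)).eval r = 0 := by
      rwa [eval_map, ← aeval_def]
    have hlt : (p.map (algebraMap ℤ ℂ)).natDegree < 4 := by
      rw [hmon.natDegree_map]; omega
    rw [eval_eq_sum_range' hlt] at h1
    simp only [Finset.sum_range_succ, Finset.sum_range_zero, coeff_map] at h1
    rw [hc0, hc3, hct, ← hs] at h1
    simp only [eq_intCast] at h1
    push_cast at h1
    linear_combination h1
  -- conj β is a root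
  set γ := (starRingEnd ℂ) β with hγ
  have hγroot : aeval γ p = 0 := by
    have h : aeval γ p = (starRingEnd ℂ) (aeval β p) :=
      aeval_algHom_apply ((starRingEnd ℂ).toIntAlgHom) β p
    rw [h, hβroot, map_zero]
  have hαC : aeval ((α : ℂ)) p = 0 := by
    have h : aeval ((α : ℂ)) p = Complex.ofRealHom (aeval α p) :=
      aeval_algHom_apply (Complex.ofRealHom.toIntAlgHom) α p
    rw [h, hαroot, map_zero]
  -- distinctness
  have hγim : γ.im = -β.im := Complex.conj_im β
  have hαβ : (α : ℂ) ≠ β := by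
    intro h; exact hβ (by rw [← h]; simp)
  have hαγ : (α : ℂ) ≠ γ := by
    intro h; apply hβ
    have h2 := congrArg Complex.im h
    simp [hγim] at h2
    linarith
  have hβγ : β ≠ γ := by
    intro h; apply hβ
    have h2 := congrArg Complex.im h
    rw [hγim] at h2; linarith
  -- factorization of p over ℂ
  have hroot : ∀ r : ℂ, aeval r p = 0 → (X - C r) ∣ p.map (algebraMap ℤ ℂ) := by
    intro r hr
    refine dvd_iff_isRoot.mpr ?_
    rw [IsRoot.def, eval_map, ← aeval_def]
    exact hr
  have hcop : ∀ a b : ℂ, a ≠ b → IsCoprime (X - C a) (X - C b) := by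
    intro a b hab
    exact isCoprime_X_sub_C_of_isUnit_sub ((sub_ne_zero_of_ne hab).isUnit)
  have hdvd : ((X - C (α : ℂ)) * (X - C β)) * (X - C γ) ∣ p.map (algebraMap ℤ ℂ) := by
    refine IsCoprime.mul_dvd ?_ ?_ (hroot γ hγroot)
    · exact (hcop _ _ hαγ).mul_left (hcop _ _ hβγ)
    · exact (hcop _ _ hαβ).mul_dvd (hroot _ hαC) (hroot _ hβroot)
  have hfact : p.map (algebraMap ℤ ℂ) = ((X - C (α : ℂ)) * (X - C β)) * (X - C γ) := by
    obtain ⟨c, hc⟩ := hdvd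
    have hq : (((X - C (α : ℂ)) * (X - C β)) * (X - C γ)).Monic :=
      ((monic_X_sub_C _).mul (monic_X_sub_C _)).mul (monic_X_sub_C _)
    have hqdeg : (((X - C (α : ℂ)) * (X - C β)) * (X - C γ)).natDegree = 3 := by
      rw [natDegree_mul ((monic_X_sub_C ((α : ℂ))).mul (monic_X_sub_C β)).ne_zero
          (X_sub_C_ne_zero γ),
        natDegree_mul (X_sub_C_ne_zero _) (X_sub_C_ne_zero β)]
      simp
    have hpmmon : (p.map (algebraMap ℤ ℂ)).Monic := hmon.map _
    have hpmdeg : (p.map (algebraMap ℤ ℂ)).natDegree = 3 := by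
      rw [hmon.natDegree_map, hdeg]
    have hc0' : c ≠ 0 := by
      rintro rfl; rw [mul_zero] at hc; exact hpmmon.ne_zero hc
    have hdc : c.natDegree = 0 := by
      have h2 := natDegree_mul hq.ne_zero hc0'
      rw [← hc, hpmdeg, hqdeg] at h2
      omega
    have hlc : c.leadingCoeff = 1 := by
      have h2 := congrArg leadingCoeff hc
      rw [leadingCoeff_mul, hq.leadingCoeff, hpmmon.leadingCoeff, one_mul] at h2
      exact h2.symm
    have hcone : c = 1 := by
      rw [eq_C_of_natDegree_eq_zero hdc]
      rw [leadingCoeff, hdc] at hlc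
      rw [hlc, map_one]
    rw [hc, hcone, mul_one]
  -- evaluation formula
  have hE : ∀ z : ℂ, -1 + s * z - t * z ^ 2 + z ^ 3
      = (z - (α : ℂ)) * (z - β) * (z - γ) := by
    intro z
    have hlt : (p.map (algebraMap ℤ ℂ)).natDegree < 4 := by
      rw [hmon.natDegree_map]; omega
    have h1 : (p.map (algebraMap ℤ ℂ)).eval z = (z - (α : ℂ)) * (z - β) * (z - γ) := by
      rw [hfact]; simp
    rw [eval_eq_sum_range' hlt] at h1
    simp only [Finset.sum_range_succ, Finset.sum_range_zero, coeff_map] at h1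
    rw [hc0, hc3, hct, ← hs] at h1
    simp only [eq_intCast] at h1
    push_cast at h1
    linear_combination h1
  -- Vieta
  have hVa : (α : ℂ) * β * γ = 1 := by linear_combination hE 0
  have hV2 : (α : ℂ) + β + γ = t := by
    linear_combination ((1:ℂ)/2) * hE 1 + ((1:ℂ)/2) * hE (-1) - hE 0
  have hV3 : (α : ℂ) * β + (α : ℂ) * γ + β * γ = s := by
    linear_combination (-(1:ℂ)/2) * hE 1 + ((1:ℂ)/2) * hE (-1)
  -- nonvanishing of roots
  have hα0 : (0 : ℝ) < α := lt_trans one_pos hα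
  have hαC0 : (α : ℂ) ≠ 0 := by
    simpa using hα0.ne'
  have hβ0 : β ≠ 0 := by
    intro h; rw [h] at hVa; simp at hVa
  have hγ0 : γ ≠ 0 := by
    intro h; rw [h] at hVa; simp at hVa
  -- cubics
  have hcα := key _ hαC
  have hcβ := key _ hβroot
  have hcγ := key _ hγroot
  -- inverse roots
  have hia : ((α : ℂ))⁻¹ ^ 3 = s * ((α : ℂ))⁻¹ ^ 2 - t * ((α : ℂ))⁻¹ + 1 := by
    field_simp
    linear_combination (-1 : ℂ) * hcα
  have hib : β⁻¹ ^ 3 = s * β⁻¹ ^ 2 - t * β⁻¹ + 1 := by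
    field_simp
    linear_combination (-1 : ℂ) * hcβ
  have hic : γ⁻¹ ^ 3 = s * γ⁻¹ ^ 2 - t * γ⁻¹ + 1 := by
    field_simp
    linear_combination (-1 : ℂ) * hcγ
  have hinva : ((α : ℂ))⁻¹ = β * γ :=
    inv_eq_of_mul_eq_one_right (by linear_combination hVa)
  have hinvb : β⁻¹ = (α : ℂ) * γ :=
    inv_eq_of_mul_eq_one_right (by linear_combination hVa)
  have hinvc : γ⁻¹ = (α : ℂ) * β :=
    inv_eq_of_mul_eq_one_right (by linear_combination hVa)
  have hi1 : ((α : ℂ))⁻¹ + β⁻¹ + γ⁻¹ = s := by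
    rw [hinva, hinvb, hinvc]
    linear_combination hV3
  have hi2 : ((α : ℂ))⁻¹ * β⁻¹ + ((α : ℂ))⁻¹ * γ⁻¹ + β⁻¹ * γ⁻¹ = t := by
    rw [hinva, hinvb, hinvc]
    linear_combination ((α : ℂ) + β + γ) * hVa + hV2
  -- main claim
  have hmain : ∀ N : ℕ, 0 < N → (β ^ N).im ≠ 0 := by
    intro N hN him
    have hαN : 1 < α ^ N := one_lt_pow₀ hα hN.ne'
    obtain ⟨M, hM0, hlam, him'⟩ : ∃ M : ℕ, 0 < M ∧ 4 < α ^ M ∧ (β ^ M).im = 0 := by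
      obtain ⟨k, hk⟩ := pow_unbounded_of_one_lt (4 : ℝ) hαN
      have hk0 : k ≠ 0 := by rintro rfl; norm_num at hk
      refine ⟨N * k, Nat.mul_pos hN (Nat.pos_of_ne_zero hk0), by rwa [pow_mul], ?_⟩
      rw [pow_mul]
      have hz : β ^ N = (((β ^ N).re : ℝ) : ℂ) := by
        apply Complex.ext <;> simp [him]
      rw [hz, ← Complex.ofReal_pow, Complex.ofReal_im]
    have hlam0 : (0 : ℝ) < α ^ M := lt_trans (by norm_num) hlam
    set x : ℝ := (β ^ M).re with hx
    have hxC : β ^ M = (x : ℂ) := by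
      apply Complex.ext
      · rfl
      · rw [Complex.ofReal_im, him']
    have hγM : γ ^ M = (x : ℂ) := by
      rw [hγ, ← map_pow, hxC]
      simp
    have hx2 : ((α : ℂ)) ^ M * ((x : ℂ) * (x : ℂ)) = 1 := by
      have h2 : ((α : ℂ)) ^ M * (β ^ M * γ ^ M) = 1 := by
        calc ((α : ℂ)) ^ M * (β ^ M * γ ^ M) = ((α : ℂ) * β * γ) ^ M := by ring
          _ = 1 := by rw [hVa, one_pow]
      rw [hxC, hγM] at h2
      exact h2
    have hx2r : α ^ M * (x * x) = 1 := by exact_mod_cast hx2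
    have hx0 : x ≠ 0 := by
      intro h; rw [h] at hx2r; simp at hx2r
    -- the two integer power sums
    have specP := pseq_spec t s ((α : ℂ)) β γ hcα hcβ hcγ hV2 hV3 (2 * M)
    have specQ := pseq_spec s t ((α : ℂ))⁻¹ β⁻¹ γ⁻¹ hia hib hic hi1 hi2 (4 * M)
    have hPr : ((pseq t s (2 * M) : ℤ) : ℝ) = (α ^ M) ^ 2 + 2 * x ^ 2 := by
      have h2 : ((pseq t s (2 * M) : ℤ) : ℂ) = (((α ^ M) ^ 2 + 2 * x ^ 2 : ℝ) : ℂ) := by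
        rw [specP, mul_comm 2 M, pow_mul, pow_mul, pow_mul, hxC, hγM]
        push_cast
        ring
      exact_mod_cast h2
    have hQr : ((pseq s t (4 * M) : ℤ) : ℝ) = ((α ^ M) ^ 4)⁻¹ + 2 * (x ^ 4)⁻¹ := by
      have h2 : ((pseq s t (4 * M) : ℤ) : ℂ)
          = ((((α ^ M) ^ 4)⁻¹ + 2 * (x ^ 4)⁻¹ : ℝ) : ℂ) := by
        rw [specQ, mul_comm 4 M, inv_pow, inv_pow, inv_pow, pow_mul, pow_mul, pow_mul,
          hxC, hγM]
        push_cast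
        ring
      exact_mod_cast h2
    -- the contradiction
    have hx2inv : x ^ 2 = (α ^ M)⁻¹ := by
      rw [pow_two]
      exact eq_inv_of_mul_eq_one_right hx2r
    have hx4 : x ^ 4 = ((α ^ M) ^ 2)⁻¹ := by
      rw [show x ^ 4 = (x ^ 2) ^ 2 by ring, hx2inv, inv_pow]
    have hn : ((2 * pseq t s (2 * M) - pseq s t (4 * M) : ℤ) : ℝ)
        = (4 * (α ^ M) ^ 3 - 1) / (α ^ M) ^ 4 := by
      push_cast [hPr, hQr]
      rw [hx2inv, hx4]
      field_simp
      ring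
    have hnum : (0 : ℝ) < 4 * (α ^ M) ^ 3 - 1 := by nlinarith
    have hpos : (0 : ℝ) < ((2 * pseq t s (2 * M) - pseq s t (4 * M) : ℤ) : ℝ) := by
      rw [hn]; positivity
    have hlt1 : ((2 * pseq t s (2 * M) - pseq s t (4 * M) : ℤ) : ℝ) < 1 := by
      rw [hn, div_lt_one (by positivity)]
      have hL3 : (0 : ℝ) < (α ^ M) ^ 3 := by positivity
      nlinarith [hL3, hlam]
    have h1le : (1 : ℤ) ≤ 2 * pseq t s (2 * M) - pseq s t (4 * M) := by
      have h2 : (0 : ℤ) < 2 * pseq t s (2 * M) - pseq s t (4 * M) := by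
        exact_mod_cast hpos
      omega
    linarith [show (1 : ℝ) ≤ ((2 * pseq t s (2 * M) - pseq s t (4 * M) : ℤ) : ℝ) by
      exact_mod_cast h1le]
  refine ⟨?_, hmain⟩
  intro q hq
  apply hmain (2 * q.den) (by positivity)
  rw [hq, mul_pow, ← Complex.exp_nat_mul]
  have hqd : ((q.den : ℂ)) * (q : ℂ) = ((q.num : ℤ) : ℂ) := by
    have h3 : ((q * q.den : ℚ) : ℂ) = ((q.num : ℚ) : ℂ) := by
      rw [Rat.mul_den_eq_num]
    push_cast at h3 ⊢
    linear_combination h3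
  have harg : ((2 * q.den : ℕ) : ℂ) * ((q : ℂ) * Real.pi * Complex.I)
      = ((q.num : ℤ) : ℂ) * (2 * Real.pi * Complex.I) := by
    push_cast
    push_cast at hqd
    linear_combination 2 * (Real.pi : ℂ) * Complex.I * hqd
  rw [harg, Complex.exp_int_mul_two_pi_mul_I, mul_one, ← Complex.ofReal_pow,
    Complex.ofReal_im]
end

section
/- Let K be a number field having exactly two non-real embeddings into ℂ, and let τ : K → ℂ be one of them. Assume that the only intermediate field ℚ ⊆ T ⊆ K which is totally real is T = ℚ. If x ∈ K satisfies τ(x) ∈ ℝ, then x ∈ ℚ. -/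
open NumberField

/-- Let `K` be a number field with exactly two non-real embeddings into `ℂ`, let `τ` be one
of them, and assume the only totally real intermediate field of `K/ℚ` is `ℚ` itself.
If `x ∈ K` satisfies `τ x ∈ ℝ`, then `x ∈ ℚ`. -/
theorem stmt4 (K : Type*) [Field K] [NumberField K]
    (hcard : Nat.card {σ : K →+* ℂ // ¬ NumberField.ComplexEmbedding.IsReal σ} = 2)
    (τ : K →+* ℂ) (hτ : ¬ NumberField.ComplexEmbedding.IsReal τ)
    (htr : ∀ T : IntermediateField ℚ K,
      (∀ φ : T →+* ℂ, ∀ y : T, (φ y).im = 0) → T = ⊥)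
    (x : K) (hx : (τ x).im = 0) :
    x ∈ (⊥ : IntermediateField ℚ K) := by
  -- the subfield of elements sent to ℝ by τ
  let S : Subfield K := (Complex.ofRealHom.fieldRange).comap τ
  have hmem : ∀ z : K, z ∈ S ↔ (τ z).im = 0 := by
    intro z
    constructor
    · rintro ⟨r, hr⟩
      rw [← hr]; simp
    · intro h
      exact ⟨(τ z).re, Complex.ext (by simp) (by simp [h])⟩
  let T : IntermediateField ℚ K := S.toIntermediateField (fun q => by
    rw [hmem]
    simp [map_ratCast])
  -- τ and its conjugate are the only non-real embeddings
  have hconj_ne : NumberField.ComplexEmbedding.conjugate τ ≠ τ := fun h =>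
    hτ (ComplexEmbedding.isReal_iff.mpr h)
  have hconj_nr : ¬ ComplexEmbedding.IsReal (ComplexEmbedding.conjugate τ) := by
    rw [ComplexEmbedding.isReal_conjugate_iff]; exact hτ
  have htwo : ∀ ψ : K →+* ℂ, ¬ ComplexEmbedding.IsReal ψ →
      ψ = τ ∨ ψ = ComplexEmbedding.conjugate τ := by
    intro ψ hψ
    classical
    have : Finite {σ : K →+* ℂ // ¬ ComplexEmbedding.IsReal σ} :=
      Subtype.finite
    cases nonempty_fintype {σ : K →+* ℂ // ¬ ComplexEmbedding.IsReal σ}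
    have hcard' : Fintype.card {σ : K →+* ℂ // ¬ ComplexEmbedding.IsReal σ} = 2 := by
      rw [← Nat.card_eq_fintype_card]; exact hcard
    set a : {σ : K →+* ℂ // ¬ ComplexEmbedding.IsReal σ} := ⟨τ, hτ⟩
    set b : {σ : K →+* ℂ // ¬ ComplexEmbedding.IsReal σ} := ⟨_, hconj_nr⟩
    set c : {σ : K →+* ℂ // ¬ ComplexEmbedding.IsReal σ} := ⟨ψ, hψ⟩
    have hab : a ≠ b := fun h => hconj_ne (congrArg Subtype.val h).symm
    have huniv : ({a, b} : Finset _) = Finset.univ := by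
      apply Finset.eq_univ_of_card
      rw [Finset.card_insert_of_notMem (by simp [hab]), Finset.card_singleton, hcard']
    have hc : c ∈ ({a, b} : Finset _) := by rw [huniv]; exact Finset.mem_univ c
    simp only [Finset.mem_insert, Finset.mem_singleton] at hc
    rcases hc with h | h
    · left; exact congrArg Subtype.val h
    · right; exact congrArg Subtype.val h
  -- T is totally real
  have hT : T = ⊥ := by
    apply htr
    intro φ y
    letI : Algebra T ℂ := φ.toAlgebra
    haveI : Module.IsTorsionFree T ℂ := Module.isTorsionFree_iff_algebraMap_injective.mpr φ.injective
    have halg : Algebra.IsAlgebraic T K := Algebra.IsAlgebraic.tower_top (K := ℚ) T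
    let ψa : K →ₐ[T] ℂ := IsAlgClosed.lift
    let ψ : K →+* ℂ := ψa.toRingHom
    have hres : ∀ t : T, ψ (t : K) = φ t := fun t => ψa.commutes t
    have hyT : (y : K) ∈ S := y.2
    rw [hmem] at hyT
    by_cases hψ : ComplexEmbedding.IsReal ψ
    · have := ComplexEmbedding.isReal_iff.mp hψ
      have h1 : (starRingEnd ℂ) (ψ (y : K)) = ψ (y : K) := by
        conv_rhs => rw [← this]
        rfl
      rw [hres] at h1
      exact Complex.conj_eq_iff_im.mp h1
    · rcases htwo ψ hψ with h | h
      · rw [← hres y, h]; exact hyT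
      · rw [← hres y, h]
        show ((starRingEnd ℂ) (τ (y : K))).im = 0
        simp [hyT]
  rw [← hT]
  show x ∈ S
  rw [hmem]
  exact hx
end

section
/- Let K be a number field with exactly s real embeddings, s ≥ 1, and exactly two (conjugate) non-real embeddings into ℂ, and assume that the only intermediate field ℚ ⊆ T ⊆ K which is totally real is T = ℚ. Then every totally positive unit u of the ring of integers 𝒪_K with u ≠ 1 satisfies ℚ(u) = K; equivalently, the minimal polynomial of u over ℚ has degree [K : ℚ] = s + 2. -/
open NumberField

private lemma nonreal_of_im_ne {K : Type*} [Field K] (σ : K →+* ℂ) (z : K)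
    (h : (σ z).im ≠ 0) : ¬ NumberField.ComplexEmbedding.IsReal σ := fun hR =>
  h (Complex.conj_eq_iff_im.mp (RingHom.congr_fun hR z))

/-- Let `K` be a number field with exactly `s ≥ 1` real embeddings and exactly two
non-real embeddings into `ℂ`, whose only totally real intermediate field is `ℚ`.
Then every totally positive unit `u ≠ 1` of `𝓞 K` satisfies `ℚ(u) = K`; equivalently,
the minimal polynomial of `u` over `ℚ` has degree `[K : ℚ] = s + 2`. -/
theorem stmt5 (K : Type*) [Field K] [NumberField K] (s : ℕ) (hs : 1 ≤ s)
    (hreal : Nat.card {σ : K →+* ℂ // NumberField.ComplexEmbedding.IsReal σ} = s)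
    (hnonreal : Nat.card {σ : K →+* ℂ // ¬ NumberField.ComplexEmbedding.IsReal σ} = 2)
    (htr : ∀ T : IntermediateField ℚ K,
      (∀ φ : T →+* ℂ, ∀ y : T, (φ y).im = 0) → T = ⊥)
    (u : (𝓞 K)ˣ) (hu1 : u ≠ 1)
    (hupos : ∀ σ : K →+* ℂ, NumberField.ComplexEmbedding.IsReal σ →
      0 < (σ (algebraMap (𝓞 K) K (u : 𝓞 K))).re) :
    IntermediateField.adjoin ℚ ({algebraMap (𝓞 K) K (u : 𝓞 K)} : Set K) = ⊤ ∧
      (minpoly ℚ (algebraMap (𝓞 K) K (u : 𝓞 K))).natDegree = Module.finrank ℚ K ∧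
      Module.finrank ℚ K = s + 2 := by
  classical
  set x : K := algebraMap (𝓞 K) K (u : 𝓞 K) with hxdef
  set T : IntermediateField ℚ K := IntermediateField.adjoin ℚ ({x} : Set K) with hTdef
  -- a real embedding exists
  obtain ⟨⟨σr, hσr⟩⟩ : Nonempty {σ : K →+* ℂ // NumberField.ComplexEmbedding.IsReal σ} :=
    (Nat.card_pos_iff.mp (by omega)).1
  have hT : T = ⊤ := by
    by_contra hne
    -- Step 1: T is totally real
    have htot : ∀ φ : T →+* ℂ, ∀ y : T, (φ y).im = 0 := by
      intro φ y
      by_contra him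
      letI : Algebra T ℂ := φ.toAlgebra
      have hcard : Fintype.card (K →ₐ[T] ℂ) = Module.finrank T K := AlgHom.card T K ℂ
      have h2 : 2 ≤ Module.finrank T K := by
        have h1 : 0 < Module.finrank T K := Module.finrank_pos
        by_contra h
        have h1' : Module.finrank T K = 1 := by omega
        exact hne (IntermediateField.eq_of_le_of_finrank_eq' le_top
          (by rw [h1', IntermediateField.finrank_top]))
      obtain ⟨σ₁, σ₂, hσne⟩ :=
        Fintype.exists_pair_of_one_lt_card (by omega : 1 < Fintype.card (K →ₐ[T] ℂ))
      set w : K := algebraMap T K y with hwdef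
      have hv₁ : (σ₁ : K →+* ℂ) w = φ y := σ₁.commutes y
      have hv₂ : (σ₂ : K →+* ℂ) w = φ y := σ₂.commutes y
      -- three distinct nonreal embeddings
      set τ₁ : K →+* ℂ := (σ₁ : K →+* ℂ)
      set τ₂ : K →+* ℂ := (σ₂ : K →+* ℂ)
      set τ₃ : K →+* ℂ := NumberField.ComplexEmbedding.conjugate (σ₁ : K →+* ℂ)
      have hv₃ : τ₃ w = (starRingEnd ℂ) (φ y) := by
        simp [τ₃, hv₁]
        exact congrArg _ hv₁
      have hn₁ : ¬ NumberField.ComplexEmbedding.IsReal τ₁ :=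
        nonreal_of_im_ne _ w (by rw [hv₁]; exact him)
      have hn₂ : ¬ NumberField.ComplexEmbedding.IsReal τ₂ :=
        nonreal_of_im_ne _ w (by rw [hv₂]; exact him)
      have hn₃ : ¬ NumberField.ComplexEmbedding.IsReal τ₃ :=
        nonreal_of_im_ne _ w (by rw [hv₃]; simpa using him)
      have h12 : τ₁ ≠ τ₂ := fun h => hσne (AlgHom.coe_ringHom_injective h)
      have h13 : τ₁ ≠ τ₃ := fun h => him (by
        have := congrFun (congrArg DFunLike.coe h) w
        rw [hv₁, hv₃] at this
        have := congrArg Complex.im this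
        simp at this
        linarith)
      have h23 : τ₂ ≠ τ₃ := fun h => him (by
        have := congrFun (congrArg DFunLike.coe h) w
        rw [hv₂, hv₃] at this
        have := congrArg Complex.im this
        simp at this
        linarith)
      -- contradiction with card = 2
      have h3 : 3 ≤ Nat.card {σ : K →+* ℂ // ¬ NumberField.ComplexEmbedding.IsReal σ} := by
        rw [Nat.card_eq_fintype_card]
        have hsub : ({⟨τ₁, hn₁⟩, ⟨τ₂, hn₂⟩, ⟨τ₃, hn₃⟩} :
            Finset {σ : K →+* ℂ // ¬ NumberField.ComplexEmbedding.IsReal σ}).card = 3 := by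
          rw [Finset.card_insert_of_notMem, Finset.card_insert_of_notMem,
            Finset.card_singleton]
          · rw [Finset.mem_singleton]
            exact fun h => h23 (congrArg Subtype.val h)
          · rw [Finset.mem_insert, Finset.mem_singleton]
            rintro (h | h)
            · exact h12 (congrArg Subtype.val h)
            · exact h13 (congrArg Subtype.val h)
        calc (3 : ℕ) = _ := hsub.symm
          _ ≤ _ := Finset.card_le_univ _
      omega
    -- Step 2: T = ⊥, so x is rational
    have hbot := htr T htot
    have hxT : x ∈ T := IntermediateField.mem_adjoin_simple_self ℚ x
    rw [hbot, IntermediateField.mem_bot] at hxT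
    obtain ⟨q, hq⟩ := hxT
    -- q > 0 via the real embedding
    have hσq : σr (algebraMap ℚ K q) = (q : ℂ) := by
      rw [← RingHom.comp_apply, (by ext1; simp : σr.comp (algebraMap ℚ K) = algebraMap ℚ ℂ)]
      simp
    have hqpos : 0 < q := by
      have h := hupos σr hσr
      rw [← hq, hσq] at h
      have : (0 : ℝ) < (q : ℝ) := by simpa using h
      exact_mod_cast this
    -- q and q⁻¹ are algebraic integers, hence q = 1
    have hint : IsIntegral ℤ x := NumberField.RingOfIntegers.isIntegral_coe _
    have hxinv : algebraMap (𝓞 K) K ((u⁻¹ : (𝓞 K)ˣ) : 𝓞 K) = x⁻¹ := by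
      have h1 : ((u : 𝓞 K) * ((u⁻¹ : (𝓞 K)ˣ) : 𝓞 K)) = 1 := u.mul_inv
      have h2 := congrArg (algebraMap (𝓞 K) K) h1
      rw [map_mul, map_one] at h2
      exact eq_inv_of_mul_eq_one_left (by rw [mul_comm]; exact h2)
    have hint' : IsIntegral ℤ (x⁻¹ : K) := by
      rw [← hxinv]; exact NumberField.RingOfIntegers.isIntegral_coe _
    have hqi : IsIntegral ℤ q := by
      rw [← hq] at hint
      exact (isIntegral_algebraMap_iff (algebraMap ℚ K).injective).mp hint
    have hqi' : IsIntegral ℤ q⁻¹ := by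
      rw [← hq, ← map_inv₀] at hint'
      exact (isIntegral_algebraMap_iff (algebraMap ℚ K).injective).mp hint'
    obtain ⟨z, hz0⟩ := IsIntegrallyClosed.isIntegral_iff.mp hqi
    obtain ⟨z', hz0'⟩ := IsIntegrallyClosed.isIntegral_iff.mp hqi'
    have hz : (z : ℚ) = q := by exact_mod_cast hz0
    have hz' : (z' : ℚ) = q⁻¹ := by exact_mod_cast hz0'
    have hzz' : z * z' = 1 := by
      have : ((z * z' : ℤ) : ℚ) = 1 := by
        push_cast
        rw [hz, hz']
        field_simp
      exact_mod_cast this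
    have hz1 : z = 1 := by
      have hzpos : 0 < z := by
        have : (0 : ℚ) < z := by rw [hz]; exact hqpos
        exact_mod_cast this
      have := Int.eq_one_of_mul_eq_one_right (le_of_lt hzpos) hzz'
      exact this
    have hq1 : q = 1 := by rw [← hz, hz1]; norm_num
    -- contradiction with u ≠ 1
    apply hu1
    ext
    show x = algebraMap (𝓞 K) K ((1 : (𝓞 K)ˣ) : 𝓞 K)
    rw [← hq, hq1, Units.val_one, map_one, map_one]
  refine ⟨hT, ?_, ?_⟩
  · have hi : IsIntegral ℚ x := IsIntegral.of_finite ℚ x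
    have h := IntermediateField.adjoin.finrank hi
    have h2 : Module.finrank ℚ T = (minpoly ℚ x).natDegree := h
    rw [← h2, hT]
    simp
  · have hfin : Fintype.card (K →+* ℂ) = Module.finrank ℚ K := NumberField.Embeddings.card K ℂ
    have hcompl := Fintype.card_subtype_compl
      (fun σ : K →+* ℂ => NumberField.ComplexEmbedding.IsReal σ)
    have hle := Fintype.card_subtype_le
      (fun σ : K →+* ℂ => NumberField.ComplexEmbedding.IsReal σ)
    rw [Nat.card_eq_fintype_card] at hreal hnonreal
    omega
end

section
/- Let K be a number field with exactly s real embeddings, s ≥ 1, and exactly two (conjugate) non-real embeddings into ℂ, and assume that the only intermediate field ℚ ⊆ T ⊆ K which is totally real is T = ℚ. Let u be a totally positive unit of the ring of integers 𝒪_K with u ≠ 1, and let τ : K → ℂ be one of the non-real embeddings. Then for every positive integer N, the complex number τ(u)^N is not real; equivalently, the argument of τ(u) is not a rational multiple of π. -/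
open NumberField

private lemma im_zero_pow' {z : ℂ} (n : ℕ) (h : z.im = 0) : (z ^ n).im = 0 := by
  have hz : z = (z.re : ℂ) := Complex.ext (by simp) (by simp [h])
  rw [hz]
  simp [← Complex.ofReal_pow]

private lemma card_two_cases' {α : Type*} [Finite α] (h : Nat.card α = 2)
    {a b : α} (hab : a ≠ b) (c : α) : c = a ∨ c = b := by
  classical
  cases nonempty_fintype α
  by_contra hc
  push_neg at hc
  have h3 : ({a, b, c} : Finset α).card = 3 := by
    rw [Finset.card_insert_of_notMem (by simp [hab, Ne.symm hc.1]),
      Finset.card_insert_of_notMem (by simp [Ne.symm hc.2]), Finset.card_singleton]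
  have hle : ({a, b, c} : Finset α).card ≤ Fintype.card α := Finset.card_le_univ _
  rw [Nat.card_eq_fintype_card] at h
  omega

private lemma isreal_im_zero {K : Type*} [Field K] {σ : K →+* ℂ}
    (hσ : NumberField.ComplexEmbedding.IsReal σ) (x : K) : (σ x).im = 0 := by
  have h1 := ComplexEmbedding.isReal_iff.mp hσ
  have h2 : ComplexEmbedding.conjugate σ x = σ x := by rw [h1]
  rw [ComplexEmbedding.conjugate_coe_eq] at h2
  exact Complex.conj_eq_iff_im.mp h2

/-- Let `K` be a number field with exactly `s ≥ 1` real embeddings and exactly two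
non-real embeddings into `ℂ`, whose only totally real intermediate field is `ℚ`.
Let `u ≠ 1` be a totally positive unit of `𝓞 K` and let `τ` be a non-real embedding.
Then `τ(u) ^ N` is non-real for every positive integer `N`; equivalently, the argument
of `τ(u)` is not a rational multiple of `π`. -/
theorem stmt6 (K : Type*) [Field K] [NumberField K] (s : ℕ) (hs : 1 ≤ s)
    (hreal : Nat.card {σ : K →+* ℂ // NumberField.ComplexEmbedding.IsReal σ} = s)
    (hnonreal : Nat.card {σ : K →+* ℂ // ¬ NumberField.ComplexEmbedding.IsReal σ} = 2)
    (htr : ∀ T : IntermediateField ℚ K,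
      (∀ φ : T →+* ℂ, ∀ y : T, (φ y).im = 0) → T = ⊥)
    (u : (𝓞 K)ˣ) (hu1 : u ≠ 1)
    (hupos : ∀ σ : K →+* ℂ, NumberField.ComplexEmbedding.IsReal σ →
      0 < (σ (algebraMap (𝓞 K) K (u : 𝓞 K))).re)
    (τ : K →+* ℂ) (hτ : ¬ NumberField.ComplexEmbedding.IsReal τ) :
    ∀ N : ℕ, 0 < N → ((τ (algebraMap (𝓞 K) K (u : 𝓞 K))) ^ N).im ≠ 0 := by
  intro N hN h
  set x : K := algebraMap (𝓞 K) K (u : 𝓞 K) with hxdef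
  -- every embedding sends x ^ N to a real number
  have key : ∀ σ : K →+* ℂ, (σ (x ^ N)).im = 0 := by
    intro σ
    rw [map_pow]
    by_cases hσ : ComplexEmbedding.IsReal σ
    · exact im_zero_pow' N (isreal_im_zero hσ x)
    · have hb : ¬ ComplexEmbedding.IsReal (ComplexEmbedding.conjugate τ) := by
        rwa [ComplexEmbedding.isReal_conjugate_iff]
      have hab : (⟨τ, hτ⟩ : {σ : K →+* ℂ // ¬ ComplexEmbedding.IsReal σ}) ≠
          ⟨ComplexEmbedding.conjugate τ, hb⟩ := by
        intro he
        apply hτ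
        rw [ComplexEmbedding.isReal_iff]
        exact (congrArg Subtype.val he).symm
      rcases card_two_cases' hnonreal hab ⟨σ, hσ⟩ with hc | hc
      · rw [show σ = τ from congrArg Subtype.val hc]
        exact h
      · rw [show σ = ComplexEmbedding.conjugate τ from congrArg Subtype.val hc,
          ComplexEmbedding.conjugate_coe_eq]
        have h4 : ((starRingEnd ℂ) (τ x)) ^ N = (starRingEnd ℂ) ((τ x) ^ N) :=
          (map_pow _ _ _).symm
        rw [h4, Complex.conj_im, h, neg_zero]
  -- the field generated by x ^ N is totally real, hence trivial
  set T : IntermediateField ℚ K := IntermediateField.adjoin ℚ {x ^ N} with hTdef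
  have hT : T = ⊥ := by
    refine htr T ?_
    intro φ z
    letI : Algebra T ℂ := φ.toAlgebra
    haveI : Module.IsTorsionFree T ℂ :=
      Module.isTorsionFree_iff_algebraMap_injective.mpr (RingHom.injective _)
    let σa : K →ₐ[T] ℂ := IsAlgClosed.lift
    let σK : K →+* ℂ := σa.toRingHom
    have hres : σK (z : K) = φ z := σa.commutes z
    have halg : ∀ q : ℚ, algebraMap ℚ K q ∈ Subfield.comap σK Complex.ofRealHom.fieldRange := by
      intro q
      refine ⟨(q : ℝ), ?_⟩
      rw [eq_ratCast (algebraMap ℚ K) q, map_ratCast]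
      simp [Complex.ofRealHom]
    have hle : T ≤ (Subfield.comap σK Complex.ofRealHom.fieldRange).toIntermediateField halg := by
      rw [hTdef]
      refine IntermediateField.adjoin_le_iff.mpr ?_
      intro w hw
      rcases hw with rfl
      show σK (x ^ N) ∈ Complex.ofRealHom.fieldRange
      refine ⟨(σK (x ^ N)).re, Complex.ext (by simp [Complex.ofRealHom]) ?_⟩
      have h5 := key σK
      simp only [map_pow] at h5 ⊢
      simp [Complex.ofRealHom, h5]
    have hz : σK (z : K) ∈ Complex.ofRealHom.fieldRange := hle z.2
    obtain ⟨r, hr⟩ := hz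
    rw [← hres, ← hr]
    simp [Complex.ofRealHom]
  -- hence x ^ N is rational
  have hxN : x ^ N ∈ T := IntermediateField.mem_adjoin_simple_self ℚ (x ^ N)
  rw [hT, IntermediateField.mem_bot] at hxN
  obtain ⟨q, hq⟩ := hxN
  -- pick a real embedding
  obtain ⟨⟨σ₀, hσ₀⟩⟩ := (Nat.card_pos_iff.mp (by omega : 0 < Nat.card
    {σ : K →+* ℂ // NumberField.ComplexEmbedding.IsReal σ})).1
  have him0 : (σ₀ x).im = 0 := isreal_im_zero hσ₀ x
  set r : ℝ := (σ₀ x).re with hrdef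
  have hrpos : 0 < r := hupos σ₀ hσ₀
  have hσ₀x : σ₀ x = (r : ℂ) := Complex.ext (by simp [hrdef]) (by simp [him0])
  have hq' : σ₀ (x ^ N) = (q : ℂ) := by
    rw [← hq, eq_ratCast (algebraMap ℚ K) q, map_ratCast]
  have hrN : r ^ N = (q : ℝ) := by
    have h2 : ((r ^ N : ℝ) : ℂ) = (((q : ℝ)) : ℂ) := by
      rw [Complex.ofReal_pow, ← hσ₀x, ← map_pow, hq']
      push_cast
      ring
    exact_mod_cast h2
  have hqpos : 0 < q := by
    have : (0 : ℝ) < (q : ℝ) := hrN ▸ pow_pos hrpos N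
    exact_mod_cast this
  -- q is a unit algebraic integer, hence q = 1
  have hqint : IsIntegral ℤ q := by
    have h1 : IsIntegral ℤ (algebraMap ℚ K q) := by
      rw [hq, hxdef, ← map_pow]
      exact RingOfIntegers.isIntegral_coe _
    exact (isIntegral_algebraMap_iff (algebraMap ℚ K).injective).mp h1
  have hqinvint : IsIntegral ℤ (q⁻¹) := by
    have h1 : IsIntegral ℤ (algebraMap ℚ K q⁻¹) := by
      rw [map_inv₀, hq, hxdef, ← map_pow]
      have hinv : algebraMap (𝓞 K) K (((u⁻¹ : (𝓞 K)ˣ) : 𝓞 K) ^ N)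
          * algebraMap (𝓞 K) K ((u : 𝓞 K) ^ N) = 1 := by
        rw [← map_mul, ← mul_pow, ← Units.val_mul, inv_mul_cancel]
        simp
      rw [← eq_inv_of_mul_eq_one_left hinv]
      exact RingOfIntegers.isIntegral_coe _
    exact (isIntegral_algebraMap_iff (algebraMap ℚ K).injective).mp h1
  obtain ⟨m, hm⟩ := IsIntegrallyClosed.isIntegral_iff.mp hqint
  obtain ⟨m', hm'⟩ := IsIntegrallyClosed.isIntegral_iff.mp hqinvint
  have hmm' : m * m' = 1 := by
    have h2 : ((m * m' : ℤ) : ℚ) = 1 := by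
      push_cast
      rw [show ((m : ℚ)) = q from hm, show ((m' : ℚ)) = q⁻¹ from hm']
      field_simp
    exact_mod_cast h2
  have hm1 : m = 1 ∨ m = -1 := Int.isUnit_iff.mp (IsUnit.of_mul_eq_one m' hmm')
  have hq1 : q = 1 := by
    rcases hm1 with h1 | h1
    · rw [← hm, h1]; norm_num
    · exfalso; rw [← hm, h1] at hqpos; norm_num at hqpos
  -- so r ^ N = 1 with r > 0, forcing r = 1
  rw [hq1] at hrN
  have hr1 : r = 1 := by
    rcases lt_trichotomy r 1 with hlt | heq | hgt
    · have := pow_lt_one₀ (le_of_lt hrpos) hlt hN.ne'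
      rw [hrN] at this
      norm_num at this
    · exact heq
    · have := one_lt_pow₀ hgt hN.ne'
      rw [hrN] at this
      norm_num at this
  -- hence x = 1 and u = 1, contradiction
  have hx1 : x = 1 := by
    apply σ₀.injective
    rw [hσ₀x, hr1, map_one]
    norm_num
  apply hu1
  have hcoe : (u : 𝓞 K) = 1 :=
    RingOfIntegers.coe_injective (by rw [map_one, ← hxdef]; exact hx1)
  exact Units.ext (by simpa using hcoe)
end

section
/- The Galois group of the polynomial X⁴ − X − 1 over ℚ (that is, the Galois group of its splitting field over ℚ) is isomorphic to the symmetric group S₄. -/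
open Polynomial

namespace Stmt11Aux

open Module IntermediateField

noncomputable def f : ℚ[X] := X ^ 4 - X - 1
lemma f_monic : f.Monic := by unfold f; monicity!
lemma f_natDegree : f.natDegree = 4 := by unfold f; compute_degree!
lemma f_ne_zero : f ≠ 0 := f_monic.ne_zero
lemma f_irr : Irreducible f := X_pow_sub_X_sub_one_irreducible_rat (by norm_num)
lemma f_sep : f.Separable := f_irr.separable

noncomputable def g : ℚ[X] := X ^ 3 + C 4 * X - 1
lemma g_monic : g.Monic := by unfold g; monicity!
lemma g_natDegree : g.natDegree = 3 := by unfold g; compute_degree!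

lemma g_irr : Irreducible g := by
  rw [irreducible_iff_roots_eq_zero_of_degree_le_three (by rw [g_natDegree]; norm_num)
    (le_of_eq g_natDegree)]
  rw [Multiset.eq_zero_iff_forall_notMem]
  intro x hx
  rw [mem_roots g_monic.ne_zero] at hx
  have hx' : aeval x ((X : ℤ[X]) ^ 3 + C 4 * X - 1) = 0 := by
    have : eval x g = 0 := hx
    simpa [g, eval_pow, eval_mul, map_ofNat] using this
  obtain ⟨m, hm⟩ := isInteger_of_is_root_of_monic (by monicity!) hx'
  rw [← hm] at hx'
  have hz : m ^ 3 + 4 * m - 1 = 0 := by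
    have : ((m : ℚ)) ^ 3 + 4 * (m : ℚ) - 1 = 0 := by
      simpa [algebraMap_int_eq, eq_intCast, map_ofNat] using hx'
    exact_mod_cast this
  have hu : IsUnit m := IsUnit.of_mul_eq_one (a := m) (m ^ 2 + 4) (by linarith [sq_nonneg m, pow_succ m 2])
  rcases Int.isUnit_iff.mp hu with rfl | rfl <;> omega

lemma roots_identities {K : Type*} [Field K] [CharZero K] [Algebra ℚ K]
    (hs : (f.map (algebraMap ℚ K)).Splits) :
    ∃ a b c d : K,
      (aeval a f = 0 ∧ aeval b f = 0 ∧ aeval c f = 0 ∧ aeval d f = 0) ∧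
      a + b + c + d = 0 ∧
      a*b + a*c + a*d + b*c + b*d + c*d = 0 ∧
      a*b*c + a*b*d + a*c*d + b*c*d = 1 ∧
      a*b*c*d = -1 := by
  set p : K[X] := f.map (algebraMap ℚ K) with hp
  have hpm : p.Monic := f_monic.map _
  have hcard : Multiset.card p.roots = 4 := by
    rw [← Splits.natDegree_eq_card_roots hs, hp, natDegree_map, f_natDegree]
  obtain ⟨a, t, hat⟩ : ∃ a t, p.roots = a ::ₘ t := by
    have hne : p.roots ≠ 0 := by
      intro h; rw [h] at hcard; simp at hcard
    rcases Multiset.exists_mem_of_ne_zero hne with ⟨a, ha⟩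
    rcases Multiset.exists_cons_of_mem ha with ⟨t, ht⟩
    exact ⟨a, t, ht⟩
  have htcard : Multiset.card t = 3 := by
    have := hcard; rw [hat, Multiset.card_cons] at this; omega
  obtain ⟨b, c, d, rfl⟩ := Multiset.card_eq_three.mp htcard
  have hprod : p = (X - C a) * ((X - C b) * ((X - C c) * (X - C d))) := by
    have := Splits.eq_prod_roots_of_monic hs hpm
    rw [this, hat]
    simp [Multiset.map_cons, Multiset.prod_cons, mul_assoc]
  have hkey : ∀ x : K, x ^ 4 - x - 1 = (x - a) * ((x - b) * ((x - c) * (x - d))) := by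
    intro x
    have := congrArg (eval x) hprod
    simpa [hp, f, eval_mul] using this
  have h0 := hkey 0
  have h1 := hkey 1
  have hm1 := hkey (-1)
  have h2 := hkey 2
  have he1 : a + b + c + d = 0 := by
    linear_combination (1/2 : K) * h0 - (1/2 : K) * h1 - (1/6 : K) * hm1 + (1/6 : K) * h2
  have he2 : a*b + a*c + a*d + b*c + b*d + c*d = 0 := by
    linear_combination (1 : K) * h0 - (1/2 : K) * h1 - (1/2 : K) * hm1
  have he3 : a*b*c + a*b*d + a*c*d + b*c*d = 1 := by
    linear_combination (-1/2 : K) * h0 + (1 : K) * h1 - (1/3 : K) * hm1 - (1/6 : K) * h2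
  have he4 : a*b*c*d = -1 := by linear_combination (-1 : K) * h0
  have hroot : ∀ x : K, x ∈ p.roots → aeval x f = 0 := by
    intro x hx
    have : eval x p = 0 := (mem_roots hpm.ne_zero).mp hx
    rwa [hp, eval_map, ← aeval_def] at this
  refine ⟨a, b, c, d, ⟨?_, ?_, ?_, ?_⟩, he1, he2, he3, he4⟩ <;>
    apply hroot <;> rw [hat] <;> simp

lemma resolvent_root {K : Type*} [Field K] {a b c d : K}
    (he1 : a + b + c + d = 0)
    (he2 : a*b + a*c + a*d + b*c + b*d + c*d = 0)
    (he3 : a*b*c + a*b*d + a*c*d + b*c*d = 1)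
    (he4 : a*b*c*d = -1) :
    (a*b + c*d)^3 + 4*(a*b + c*d) - 1 = 0 := by
  linear_combination
    (-(a*b*c + a*b*d + a*c*d + b*c*d)*(a*b + c*d) + (a*b*c*d)*(a + b + c + d)) * he1 +
    ((a*b + c*d)^2 - 4*(a*b*c*d)) * he2 +
    ((a*b*c + a*b*d + a*c*d + b*c*d) + 1) * he3 +
    (4*(a*b + c*d)) * he4

lemma dvd_finrank_of_root {L : Type*} [Field L] [Algebra ℚ L] [FiniteDimensional ℚ L]
    {p : ℚ[X]} (hirr : Irreducible p) (hmonic : p.Monic) {x : L} (hx : aeval x p = 0) :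
    p.natDegree ∣ finrank ℚ L := by
  have hint : IsIntegral ℚ x := .of_finite ℚ x
  have hmin : minpoly ℚ x = p := (minpoly.eq_of_irreducible_of_monic hirr hx hmonic).symm
  have hfr : finrank ℚ ℚ⟮x⟯ = p.natDegree := by
    rw [IntermediateField.adjoin.finrank hint, hmin]
  exact hfr ▸ ⟨finrank ℚ⟮x⟯ L, (finrank_mul_finrank ℚ ℚ⟮x⟯ L).symm⟩

lemma swap_exists [hF : Fact ((f.map (algebraMap ℚ ℂ)).Splits)] :
    Equiv.Perm.IsSwap
      (Polynomial.Gal.galActionHom f ℂ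
        (Polynomial.Gal.restrict f ℂ (Complex.conjAe.restrictScalars ℚ))) := by
  set σc := Polynomial.Gal.galActionHom f ℂ
      (Polynomial.Gal.restrict f ℂ (Complex.conjAe.restrictScalars ℚ)) with hσc
  rw [← Equiv.Perm.card_support_eq_two]
  have key := Polynomial.Gal.card_complex_roots_eq_card_real_add_card_not_gal_inv f
  rw [← hσc] at key
  have hC4 : (f.rootSet ℂ).toFinset.card = 4 := by
    rw [Set.toFinset_card, card_rootSet_eq_natDegree f_sep (IsAlgClosed.splits _),
      f_natDegree]
  have hR1 : 1 ≤ (f.rootSet ℝ).toFinset.card := by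
    have hcont : ContinuousOn (fun x : ℝ => aeval x f) (Set.Icc 0 2) :=
      (f.continuous_aeval).continuousOn
    have h02 : (0:ℝ) ∈ Set.Icc (aeval (0:ℝ) f) (aeval (2:ℝ) f) := by
      simp only [f, map_sub, map_pow, aeval_X, map_one]
      norm_num
    obtain ⟨r, _, hr⟩ := intermediate_value_Icc (by norm_num : (0:ℝ) ≤ 2) hcont h02
    exact Finset.card_pos.mpr ⟨r, Set.mem_toFinset.mpr (mem_rootSet.mpr ⟨f_ne_zero, hr⟩)⟩
  have h2dvd : 2 ∣ σc.support.card := by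
    apply Equiv.Perm.two_dvd_card_support
    rw [hσc, ← MonoidHom.map_pow, ← MonoidHom.map_pow,
      show AlgEquiv.restrictScalars ℚ Complex.conjAe ^ 2 = 1 from
        AlgEquiv.ext Complex.conj_conj,
      MonoidHom.map_one, MonoidHom.map_one]
  have hne : σc ≠ 1 := by
    intro h1
    have him : ∀ w : ℂ, (hw : w ∈ f.rootSet ℂ) → w.im = 0 := by
      intro w hw
      have := Polynomial.Gal.galActionHom_restrict f ℂ
        (Complex.conjAe.restrictScalars ℚ) ⟨w, hw⟩
      rw [← hσc, h1] at this
      simp only [Equiv.Perm.coe_one, id_eq] at this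
      exact Complex.conj_eq_iff_im.mp (by simpa using this.symm)
    obtain ⟨a, b, c, d, ⟨ha, hb, hc, hd⟩, he1, he2, he3, he4⟩ :=
      roots_identities (K := ℂ) (IsAlgClosed.splits _)
    have hmem : ∀ x : ℂ, aeval x f = 0 → x.im = 0 := fun x hx =>
      him x (mem_rootSet.mpr ⟨f_ne_zero, hx⟩)
    have hia := hmem a ha; have hib := hmem b hb
    have hic := hmem c hc; have hid := hmem d hd
    have hsq : a^2 + b^2 + c^2 + d^2 = 0 := by
      linear_combination (a + b + c + d) * he1 - 2 * he2
    have hre : a.re^2 + b.re^2 + c.re^2 + d.re^2 = 0 := by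
      have := congrArg Complex.re hsq
      simpa [pow_two, Complex.mul_re, hia, hib, hic, hid] using this
    have ha0 : a = 0 := by
      apply Complex.ext _ hia
      simp only [Complex.zero_re]
      nlinarith [sq_nonneg a.re, sq_nonneg b.re, sq_nonneg c.re, sq_nonneg d.re]
    rw [ha0] at he4
    simp at he4
  have hsupp_ne : σc.support.card ≠ 0 := by
    intro h
    exact hne (Equiv.Perm.support_eq_empty_iff.mp (Finset.card_eq_zero.mp h))
  omega

noncomputable def permMulEquiv {α β : Type*} (e : α ≃ β) : Equiv.Perm α ≃* Equiv.Perm β :=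
  { e.permCongr with
    map_mul' := fun σ τ => by
      ext x
      simp [Equiv.permCongr_apply, Equiv.Perm.mul_apply] }

lemma range_eq_top {β : Type*} [Fintype β] [DecidableEq β] (hβ : Fintype.card β = 4)
    {G : Type*} [Group G] (φ : G →* Equiv.Perm β)
    (h12 : 12 ∣ Nat.card φ.range)
    {τ : Equiv.Perm β} (hτmem : τ ∈ φ.range) (hτ : τ.IsSwap) :
    φ.range = ⊤ := by
  have hperm : Nat.card (Equiv.Perm β) = 24 := by
    rw [Nat.card_eq_fintype_card, Fintype.card_perm, hβ]
    rfl
  have hdvd24 : Nat.card φ.range ∣ 24 := hperm ▸ Subgroup.card_subgroup_dvd_card _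
  obtain ⟨k, hk⟩ := h12
  have hk2 : k ∣ 2 := by
    have h : (12:ℕ) * k ∣ 12 * 2 := by
      rw [← hk]; exact hdvd24
    exact (mul_dvd_mul_iff_left (by norm_num : (12:ℕ) ≠ 0)).mp h
  have hkpos : k ≠ 0 := by
    intro h
    have : Nat.card φ.range ≠ 0 := Nat.card_pos.ne'
    omega
  have hkle : k ≤ 2 := Nat.le_of_dvd (by norm_num) hk2
  have hcases : Nat.card φ.range = 12 ∨ Nat.card φ.range = 24 := by
    interval_cases k <;> omega
  rcases hcases with h12' | h24
  · exfalso
    have hidx : φ.range.index = 2 := by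
      have := Subgroup.card_mul_index φ.range
      rw [h12', hperm] at this
      omega
    have hA : alternatingGroup β ≤ φ.range := by
      rw [← Equiv.Perm.closure_three_cycles_eq_alternating, Subgroup.closure_le]
      rintro σ hσ
      have h3 : σ ^ 3 = 1 := by
        rw [← Equiv.Perm.IsThreeCycle.orderOf hσ]
        exact pow_orderOf_eq_one σ
      have : σ = (σ * σ) ^ 2 := by
        have h4 : (σ * σ) ^ 2 = σ ^ 3 * σ := by
          rw [← pow_two, ← pow_mul, pow_succ]
        rw [h4, h3, one_mul]
      rw [this]
      exact Subgroup.sq_mem_of_index_two hidx (σ * σ)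
    have hAcard : Nat.card (alternatingGroup β) = 12 := by
      haveI : Nontrivial β := Fintype.one_lt_card_iff_nontrivial.mp (by omega)
      have := two_mul_card_alternatingGroup (α := β)
      rw [Fintype.card_perm, hβ, show Nat.factorial 4 = 24 from rfl] at this
      rw [Nat.card_eq_fintype_card]
      omega
    have heq : alternatingGroup β = φ.range :=
      Subgroup.eq_of_le_of_card_ge hA (by rw [h12', hAcard])
    have hτA : τ ∈ alternatingGroup β := heq ▸ hτmem
    have hsign : Equiv.Perm.sign τ = 1 := Equiv.Perm.mem_alternatingGroup.mp hτA
    rw [hτ.sign_eq] at hsign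
    exact absurd hsign (by decide)
  · exact Subgroup.eq_top_of_card_eq _ (by rw [h24, hperm])

lemma main : Nonempty (f.Gal ≃* Equiv.Perm (Fin 4)) := by
  classical
  set L := f.SplittingField with hL
  haveI : CharZero L := charZero_of_injective_algebraMap (algebraMap ℚ L).injective
  have hs : (f.map (algebraMap ℚ L)).Splits := SplittingField.splits f
  obtain ⟨a, b, c, d, ⟨ha, _, _, _⟩, he1, he2, he3, he4⟩ := roots_identities (K := L) hs
  have h4 : 4 ∣ finrank ℚ L := by
    have := dvd_finrank_of_root f_irr f_monic ha
    rwa [f_natDegree] at this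
  have h3 : 3 ∣ finrank ℚ L := by
    have hy : aeval (a*b + c*d) g = 0 := by
      have := resolvent_root he1 he2 he3 he4
      simp only [g, map_sub, map_add, map_pow, map_mul, aeval_X, map_one, aeval_C]
      rw [show (algebraMap ℚ L) 4 = 4 by norm_num]
      linear_combination this
    have := dvd_finrank_of_root g_irr g_monic hy
    rwa [g_natDegree] at this
  have h12 : 12 ∣ finrank ℚ L :=
    Nat.Coprime.mul_dvd_of_dvd_of_dvd (by norm_num) h4 h3
  -- complex side
  haveI hF : Fact ((f.map (algebraMap ℚ ℂ)).Splits) := ⟨IsAlgClosed.splits _⟩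
  set φ := Polynomial.Gal.galActionHom f ℂ with hφ
  have hinj : Function.Injective φ := Polynomial.Gal.galActionHom_injective f ℂ
  have hC4 : Fintype.card (f.rootSet ℂ) = 4 := by
    rw [card_rootSet_eq_natDegree f_sep (IsAlgClosed.splits _), f_natDegree]
  have hGalcard : Nat.card f.Gal = finrank ℚ L := by
    rw [Polynomial.Gal.card_of_separable f_sep]
  have hrange_card : Nat.card φ.range = Nat.card f.Gal :=
    (Nat.card_congr (MonoidHom.ofInjective hinj).toEquiv).symm
  have h12' : 12 ∣ Nat.card φ.range := by
    rw [hrange_card, hGalcard]; exact h12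
  have hτmem : φ (Polynomial.Gal.restrict f ℂ (Complex.conjAe.restrictScalars ℚ)) ∈ φ.range :=
    ⟨_, rfl⟩
  have htop : φ.range = ⊤ := range_eq_top hC4 φ h12' hτmem swap_exists
  have hsurj : Function.Surjective φ := by
    intro x
    have : x ∈ φ.range := htop ▸ Subgroup.mem_top x
    exact this
  exact ⟨(MulEquiv.ofBijective φ ⟨hinj, hsurj⟩).trans
    (permMulEquiv (Fintype.equivFinOfCardEq hC4))⟩

end Stmt11Aux

/-- The Galois group of `X⁴ − X − 1` over `ℚ` is isomorphic to the symmetric group `S₄`. -/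
theorem stmt11 :
    Nonempty (((X : Polynomial ℚ) ^ 4 - X - 1).Gal ≃* Equiv.Perm (Fin 4)) :=
  Stmt11Aux.main
end

section
/- Let α ∈ ℝ be a real root of X⁴ − X − 1 and set K = ℚ(α) ⊂ ℂ. Then K is a number field of degree 4 over ℚ with exactly two real embeddings and exactly two (conjugate) non-real embeddings into ℂ, and there is no intermediate field T with ℚ ⊊ T ⊊ K. -/
open Polynomial IntermediateField Module

lemma realroots : ∃ b₁ b₂ : ℝ, b₁ < b₂ ∧ (b₁^4 - b₁ - 1 = 0) ∧ (b₂^4 - b₂ - 1 = 0) ∧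
    ∀ x : ℝ, x^4 - x - 1 = 0 → x = b₁ ∨ x = b₂ := by
  set f : ℝ → ℝ := fun x => x^4 - x - 1 with hf
  have hfc : Continuous f := by fun_prop
  obtain ⟨b₁, hb₁mem, hb₁⟩ : ∃ x ∈ Set.Icc (-1:ℝ) 0, f x = 0 := by
    have h := intermediate_value_Icc' (by norm_num : (-1:ℝ) ≤ 0) hfc.continuousOn
    have h0 : (0:ℝ) ∈ Set.Icc (f 0) (f (-1)) := by norm_num [hf]
    obtain ⟨x, hx, hfx⟩ := h h0
    exact ⟨x, hx, hfx⟩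
  obtain ⟨b₂, hb₂mem, hb₂⟩ : ∃ x ∈ Set.Icc (1:ℝ) 2, f x = 0 := by
    have h := intermediate_value_Icc (by norm_num : (1:ℝ) ≤ 2) hfc.continuousOn
    have h0 : (0:ℝ) ∈ Set.Icc (f 1) (f 2) := by norm_num [hf]
    obtain ⟨x, hx, hfx⟩ := h h0
    exact ⟨x, hx, hfx⟩
  have hb₁0 : b₁ < 0 := lt_of_le_of_ne hb₁mem.2 (by rintro rfl; norm_num [hf] at hb₁)
  have hb₂1 : 1 < b₂ := lt_of_le_of_ne hb₂mem.1 (by rintro rfl; norm_num [hf] at hb₂)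
  set c : ℝ := (4:ℝ)⁻¹ ^ ((3:ℝ)⁻¹) with hc
  have hc0 : 0 < c := Real.rpow_pos_of_pos (by norm_num) _
  have hc1 : c < 1 := Real.rpow_lt_one (by norm_num) (by norm_num) (by norm_num)
  have hc3 : c ^ (3:ℕ) = 4⁻¹ := by
    rw [hc, ← Real.rpow_natCast ((4:ℝ)⁻¹ ^ ((3:ℝ)⁻¹)) 3, ← Real.rpow_mul (by norm_num)]
    norm_num
  have hderiv : ∀ x : ℝ, HasDerivAt f (4*x^3 - 1) x := by
    intro x
    have h := ((hasDerivAt_pow 4 x).sub (hasDerivAt_id x)).sub_const 1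
    exact h.congr_deriv (show ((4:ℕ):ℝ) * x ^ (4 - 1) - 1 = 4*x^3 - 1 by push_cast; ring)
  have hanti : StrictAntiOn f (Set.Iic c) := by
    apply strictAntiOn_of_deriv_neg (convex_Iic c) hfc.continuousOn
    intro x hx
    rw [interior_Iic] at hx
    rw [(hderiv x).deriv]
    have h3 : x ^ 3 < c ^ 3 := Odd.strictMono_pow (by decide) hx
    rw [hc3] at h3
    nlinarith
  have hmono : StrictMonoOn f (Set.Ici c) := by
    apply strictMonoOn_of_deriv_pos (convex_Ici c) hfc.continuousOn
    intro x hx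
    rw [interior_Ici] at hx
    rw [(hderiv x).deriv]
    have h3 : c ^ 3 < x ^ 3 := Odd.strictMono_pow (by decide) hx
    rw [hc3] at h3
    nlinarith
  refine ⟨b₁, b₂, by linarith, hb₁, hb₂, ?_⟩
  intro x hx
  rcases le_total x c with h | h
  · left
    exact hanti.injOn h (le_of_lt (lt_of_lt_of_le hb₁0 hc0.le)) (by rw [hb₁]; simpa [hf] using hx)
  · right
    exact hmono.injOn h (le_of_lt (lt_of_lt_of_le hc1 hb₂1.le)) (by rw [hb₂]; simpa [hf] using hx)



lemma cubic_irred : Irreducible (X^3 + 4*X - 1 : ℚ[X]) := by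
  have hdeg : (X^3 + 4*X - 1 : ℚ[X]).natDegree = 3 := by compute_degree!
  rw [irreducible_iff_roots_eq_zero_of_degree_le_three (by rw [hdeg]; norm_num) (by rw [hdeg])]
  rw [Multiset.eq_zero_iff_forall_notMem]
  intro x hx
  have hne : (X^3 + 4*X - 1 : ℚ[X]) ≠ 0 := fun h => by simp [h] at hdeg
  rw [mem_roots hne] at hx
  have hx' : x^3 + 4*x - 1 = 0 := by simpa [IsRoot] using hx
  have haev : aeval x (X^3 + 4*X - 1 : ℤ[X]) = 0 := by
    simp only [map_sub, map_add, map_mul, map_pow, aeval_X, aeval_one, map_ofNat]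
    exact_mod_cast hx'
  obtain ⟨n, hn, hdvd⟩ := exists_integer_of_is_root_of_monic (p := (X^3 + 4*X - 1 : ℤ[X]))
    (by monicity!) haev
  have hc0 : (X^3 + 4*X - 1 : ℤ[X]).coeff 0 = -1 := by simp
  rw [hc0] at hdvd
  have : n = 1 ∨ n = -1 := by
    have := Int.isUnit_iff.mp (isUnit_of_dvd_unit hdvd (by norm_num))
    tauto
  rcases this with rfl | rfl <;> rw [hn] at hx' <;> norm_num at hx'

lemma quad_eq {R : Type*} [CommRing R] {f : R[X]} (hf : f.Monic) (h2 : f.natDegree = 2) :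
    f = X^2 + C (f.coeff 1) * X + C (f.coeff 0) := by
  have h3 := f.as_sum_range' 3 (by omega)
  have hc2 : f.coeff 2 = 1 := h2 ▸ hf.coeff_natDegree
  conv_lhs => rw [h3]
  rw [Finset.sum_range_succ, Finset.sum_range_succ, Finset.sum_range_one, hc2,
    ← C_mul_X_pow_eq_monomial, ← C_mul_X_pow_eq_monomial, ← C_mul_X_pow_eq_monomial]
  simp
  ring

set_option maxHeartbeats 1600000 in
set_option synthInstance.maxHeartbeats 400000 in
/-- Let `α ∈ ℝ` be a real root of `X⁴ − X − 1` and set `K = ℚ(α) ⊂ ℂ`. Then `K` is a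
number field of degree `4` over `ℚ`, with exactly two real embeddings and exactly two
non-real embeddings into `ℂ`, and there is no intermediate field strictly between `ℚ`
and `K`. -/
theorem stmt12 (α : ℝ) (hα : α ^ 4 - α - 1 = 0)
    (K : IntermediateField ℚ ℂ)
    (hK : K = IntermediateField.adjoin ℚ ({(α : ℂ)} : Set ℂ)) :
    NumberField K ∧ Module.finrank ℚ K = 4 ∧
      Nat.card {σ : K →+* ℂ // NumberField.ComplexEmbedding.IsReal σ} = 2 ∧
      Nat.card {σ : K →+* ℂ // ¬ NumberField.ComplexEmbedding.IsReal σ} = 2 ∧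
      ∀ T : IntermediateField ℚ K, T = ⊥ ∨ T = ⊤ := by
  subst hK
  set p : ℚ[X] := X^4 - X - 1 with hp
  have hpmonic : p.Monic := by rw [hp]; monicity!
  have hpirr : Irreducible p := Polynomial.X_pow_sub_X_sub_one_irreducible_rat (by norm_num)
  have hpdeg : p.natDegree = 4 := by rw [hp]; compute_degree!
  have hroot : aeval ((α:ℂ)) p = 0 := by
    simp only [hp, map_sub, map_pow, aeval_X, map_one]
    exact_mod_cast congrArg (fun x : ℝ => (x : ℂ)) hα
  have hint : IsIntegral ℚ ((α:ℂ)) := ⟨p, hpmonic, hroot⟩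
  have hmin : minpoly ℚ ((α:ℂ)) = p := (minpoly.eq_of_irreducible_of_monic hpirr hroot hpmonic).symm
  letI : FiniteDimensional ℚ (adjoin ℚ ({(α : ℂ)} : Set ℂ)) :=
    IntermediateField.adjoin.finiteDimensional hint
  have hrank : finrank ℚ (adjoin ℚ ({(α : ℂ)} : Set ℂ)) = 4 := by
    rw [IntermediateField.adjoin.finrank hint, hmin, hpdeg]
  have hNF : NumberField (adjoin ℚ ({(α : ℂ)} : Set ℂ)) :=
    { to_charZero := inferInstance, to_finiteDimensional := ‹_› }
  set g : (adjoin ℚ ({(α : ℂ)} : Set ℂ)) := IntermediateField.AdjoinSimple.gen ℚ ((α:ℂ)) with hg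
  have hgmap : algebraMap _ ℂ g = (α:ℂ) := rfl
  have hgmin : minpoly ℚ g = p := by
    rw [← hmin, ← minpoly.algebraMap_eq (algebraMap (adjoin ℚ ({(α : ℂ)} : Set ℂ)) ℂ).injective g]
    exact congrArg (minpoly ℚ) hgmap
  have hgint : IsIntegral ℚ g := IsIntegral.of_finite ℚ g
  have htop : ℚ⟮g⟯ = (⊤ : IntermediateField ℚ (adjoin ℚ ({(α : ℂ)} : Set ℂ))) := by
    apply IntermediateField.eq_of_le_of_finrank_eq le_top
    rw [IntermediateField.adjoin.finrank hgint, hgmin, hpdeg, finrank_top', hrank]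
  have hAtop : Algebra.adjoin ℚ ({g} : Set _) = ⊤ := by
    rw [← IntermediateField.adjoin_simple_toSubalgebra_of_isAlgebraic hgint.isAlgebraic, htop]
    rfl
  have hom_ext : ∀ σ τ : (adjoin ℚ ({(α : ℂ)} : Set ℂ)) →+* ℂ, σ g = τ g → σ = τ := by
    intro σ τ h
    have h2 : σ.toRatAlgHom = τ.toRatAlgHom := by
      apply AlgHom.ext
      intro x
      have hx : x ∈ Algebra.adjoin ℚ ({g} : Set _) := hAtop ▸ trivial
      have : Algebra.adjoin ℚ ({g} : Set _) ≤ AlgHom.equalizer σ.toRatAlgHom τ.toRatAlgHom :=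
        Algebra.adjoin_le (by simpa using h)
      exact this hx
    have := congrArg AlgHom.toRingHom h2
    simpa using this
  -- embeddings
  have hgroot : aeval g p = 0 := by rw [← hgmin]; exact minpoly.aeval ℚ g
  have hσroot : ∀ σ : (adjoin ℚ ({(α : ℂ)} : Set ℂ)) →+* ℂ, aeval (σ g) p = 0 := by
    intro σ
    have := aeval_algHom_apply σ.toRatAlgHom g p
    simpa [hgroot] using this
  have hreal_iff : ∀ σ : (adjoin ℚ ({(α : ℂ)} : Set ℂ)) →+* ℂ,
      NumberField.ComplexEmbedding.IsReal σ ↔ (σ g).im = 0 := by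
    intro σ
    constructor
    · intro h
      have h2 := NumberField.ComplexEmbedding.isReal_iff.mp h
      have h3 : (starRingEnd ℂ) (σ g) = σ g := by
        rw [← NumberField.ComplexEmbedding.conjugate_coe_eq, h2]
      exact Complex.conj_eq_iff_im.mp h3
    · intro h
      apply NumberField.ComplexEmbedding.isReal_iff.mpr
      apply hom_ext
      exact Complex.conj_eq_iff_im.mpr h
  obtain ⟨b₁, b₂, hblt, hb1, hb2, hbcl⟩ := realroots
  have hval : ∀ σ : (adjoin ℚ ({(α : ℂ)} : Set ℂ)) →+* ℂ,
      NumberField.ComplexEmbedding.IsReal σ → σ g = (b₁:ℂ) ∨ σ g = (b₂:ℂ) := by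
    intro σ hσ
    have him := (hreal_iff σ).mp hσ
    have heq : σ g = ((σ g).re : ℂ) := Complex.ext rfl (by simp [him])
    have hre : ((σ g).re)^4 - (σ g).re - 1 = 0 := by
      have := hσroot σ
      rw [hp] at this
      simp only [map_sub, map_pow, aeval_X, map_one] at this
      rw [heq] at this
      exact_mod_cast this
    rcases hbcl _ hre with h | h
    · left; rw [heq, h]
    · right; rw [heq, h]
  set pb := IntermediateField.adjoin.powerBasis hint with hpb
  have hpbgen : pb.gen = g := rfl
  have hb1root : aeval ((b₁:ℂ)) (minpoly ℚ pb.gen) = 0 := by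
    rw [hpbgen, hgmin, hp]
    simp only [map_sub, map_pow, aeval_X, map_one]
    exact_mod_cast congrArg (fun x : ℝ => (x:ℂ)) hb1
  have hb2root : aeval ((b₂:ℂ)) (minpoly ℚ pb.gen) = 0 := by
    rw [hpbgen, hgmin, hp]
    simp only [map_sub, map_pow, aeval_X, map_one]
    exact_mod_cast congrArg (fun x : ℝ => (x:ℂ)) hb2
  set σ₁ := (pb.lift ((b₁:ℂ)) hb1root).toRingHom with hσ₁
  set σ₂ := (pb.lift ((b₂:ℂ)) hb2root).toRingHom with hσ₂
  have hσ₁g : σ₁ g = (b₁:ℂ) := by rw [hσ₁, ← hpbgen]; exact pb.lift_gen _ _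
  have hσ₂g : σ₂ g = (b₂:ℂ) := by rw [hσ₂, ← hpbgen]; exact pb.lift_gen _ _
  have hσ₁real : NumberField.ComplexEmbedding.IsReal σ₁ := (hreal_iff σ₁).mpr (by simp [hσ₁g])
  have hσ₂real : NumberField.ComplexEmbedding.IsReal σ₂ := (hreal_iff σ₂).mpr (by simp [hσ₂g])
  have hσne : σ₁ ≠ σ₂ := by
    intro h
    rw [h, hσ₂g] at hσ₁g
    exact hblt.ne' (by exact_mod_cast hσ₁g)
  have hrealcard : Nat.card {σ : (adjoin ℚ ({(α : ℂ)} : Set ℂ)) →+* ℂ //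
      NumberField.ComplexEmbedding.IsReal σ} = 2 := by
    rw [Nat.card_eq_two_iff]
    refine ⟨⟨σ₁, hσ₁real⟩, ⟨σ₂, hσ₂real⟩, by simpa [Subtype.ext_iff] using hσne, ?_⟩
    apply Set.eq_univ_of_forall
    rintro ⟨σ, hσ⟩
    rcases hval σ hσ with h | h
    · left; apply Subtype.ext; exact hom_ext _ _ (by rw [h, hσ₁g])
    · right
      simp only [Set.mem_singleton_iff]
      apply Subtype.ext; exact hom_ext _ _ (by rw [h, hσ₂g])
  have hcard : Fintype.card ((adjoin ℚ ({(α : ℂ)} : Set ℂ)) →+* ℂ) = 4 := by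
    rw [NumberField.Embeddings.card, hrank]
  have hnonrealcard : Nat.card {σ : (adjoin ℚ ({(α : ℂ)} : Set ℂ)) →+* ℂ //
      ¬ NumberField.ComplexEmbedding.IsReal σ} = 2 := by
    classical
    rw [Nat.card_eq_fintype_card, Fintype.card_subtype_compl, hcard,
      ← Nat.card_eq_fintype_card, hrealcard]
  refine ⟨hNF, hrank, hrealcard, hnonrealcard, ?_⟩
  intro T
  by_contra hcon
  push_neg at hcon
  obtain ⟨hTbot, hTtop'⟩ := hcon
  haveI : FiniteDimensional (↥T) (↥(adjoin ℚ ({(α : ℂ)} : Set ℂ))) :=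
    FiniteDimensional.right ℚ (↥T) _
  have hfr1 : finrank ℚ (↥T) ≠ 1 := fun h => hTbot (IntermediateField.finrank_eq_one_iff.mp h)
  have hmul := finrank_mul_finrank ℚ (↥T) (↥(adjoin ℚ ({(α : ℂ)} : Set ℂ)))
  rw [hrank] at hmul
  have hfr2 : finrank (↥T) (↥(adjoin ℚ ({(α : ℂ)} : Set ℂ))) ≠ 1 := by
    intro h
    rw [h, mul_one] at hmul
    exact hTtop' (IntermediateField.eq_of_le_of_finrank_eq le_top (by rw [finrank_top', hrank, hmul]))
  have hpos1 : 0 < finrank ℚ (↥T) := finrank_pos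
  have ha2 : finrank ℚ (↥T) = 2 ∧ finrank (↥T) (↥(adjoin ℚ ({(α : ℂ)} : Set ℂ))) = 2 := by
    have hdvd : finrank ℚ (↥T) ∣ 4 := ⟨_, hmul.symm⟩
    have ha4 : finrank ℚ (↥T) ≤ 4 := Nat.le_of_dvd (by norm_num) hdvd
    interval_cases h : finrank ℚ (↥T) <;> omega
  have hTgtop : IntermediateField.adjoin (↥T) ({g} : Set _) = ⊤ := by
    rw [eq_top_iff]
    intro x _
    have hx : x ∈ ℚ⟮g⟯ := htop.symm ▸ IntermediateField.mem_top
    have hle : ℚ⟮g⟯ ≤ (IntermediateField.adjoin (↥T) ({g} : Set _)).restrictScalars ℚ :=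
      IntermediateField.adjoin_le_iff.mpr (Set.singleton_subset_iff.mpr
        (IntermediateField.subset_adjoin (↥T) ({g} : Set _) rfl))
    exact hle hx
  have hgintT : IsIntegral (↥T) g := IsIntegral.of_finite (↥T) g
  have hdeg2 : (minpoly (↥T) g).natDegree = 2 := by
    have h := IntermediateField.adjoin.finrank hgintT
    rw [hTgtop, finrank_top'] at h
    rw [← h]; exact ha2.2
  set m := minpoly (↥T) g with hm
  have hmmonic : m.Monic := minpoly.monic hgintT
  have hmdvd : m ∣ p.map (algebraMap ℚ (↥T)) :=
    minpoly.dvd (↥T) g (by rw [aeval_map_algebraMap]; exact hgroot)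
  obtain ⟨m₂, hm₂⟩ := hmdvd
  have hpmapmonic : (p.map (algebraMap ℚ (↥T))).Monic := hpmonic.map _
  have hm₂monic : m₂.Monic := hmmonic.of_mul_monic_left (hm₂ ▸ hpmapmonic)
  have hpmapdeg : (p.map (algebraMap ℚ (↥T))).natDegree = 4 := by
    rw [hpmonic.natDegree_map, hpdeg]
  have hm₂deg : m₂.natDegree = 2 := by
    have hnd := natDegree_mul hmmonic.ne_zero hm₂monic.ne_zero
    rw [← hm₂, hpmapdeg, hdeg2] at hnd
    omega
  have hmeq := quad_eq hmmonic hdeg2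
  have hm₂eq := quad_eq hm₂monic hm₂deg
  set u := m.coeff 1 with hu
  set v := m.coeff 0 with hv
  set s' := m₂.coeff 1 with hs'
  set t' := m₂.coeff 0 with ht'
  have hpmap : p.map (algebraMap ℚ (↥T)) = (X^4 - X - 1 : (↥T)[X]) := by
    rw [hp]; simp
  have heq : (X^4 - X - 1 : (↥T)[X]) = (X^2 + C u * X + C v) * (X^2 + C s' * X + C t') := by
    rw [← hmeq, ← hm₂eq, ← hpmap]; exact hm₂
  have hexp : (X^2 + C u * X + C v) * (X^2 + C s' * X + C t') =
      X^4 + C (u+s') * X^3 + C (v+t'+u*s') * X^2 + C (u*t'+v*s') * X + C (v*t') := by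
    simp only [map_add, map_mul]; ring
  have heq2 := heq.trans hexp
  have e3 : (0:↥T) = u + s' := by
    have h := congrArg (fun q : Polynomial ↥T => q.coeff 3) heq2
    simp only [coeff_add, coeff_sub, coeff_C_mul, coeff_X_pow, coeff_C, coeff_X, coeff_one] at h
    norm_num at h
    linear_combination h
  have e2 : (0:↥T) = v + t' + u * s' := by
    have h := congrArg (fun q : Polynomial ↥T => q.coeff 2) heq2
    simp only [coeff_add, coeff_sub, coeff_C_mul, coeff_X_pow, coeff_C, coeff_X, coeff_one] at h
    norm_num at h
    linear_combination h
  have e1 : (-1:↥T) = u * t' + v * s' := by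
    have h := congrArg (fun q : Polynomial ↥T => q.coeff 1) heq2
    simp only [coeff_add, coeff_sub, coeff_C_mul, coeff_X_pow, coeff_C, coeff_X, coeff_one] at h
    norm_num at h
    linear_combination h
  have e0 : (-1:↥T) = v * t' := by
    have h := congrArg (fun q : Polynomial ↥T => q.coeff 0) heq2
    simp only [coeff_add, coeff_sub, coeff_C_mul, coeff_X_pow, coeff_C, coeff_X, coeff_one] at h
    norm_num at h
    linear_combination h
  have hs : s' = -u := by linear_combination -e3
  have hB' : v + t' = u * u := by linear_combination -e2 - u * hs
  have hC' : u * t' - u * v = -1 := by linear_combination -e1 - v * hs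
  have hw : (u*u)^3 + 4*(u*u) - 1 = 0 := by
    linear_combination (-(u^2)*(t'+v+u^2)) * hB' + (u*t'-u*v-1) * hC' + (-4*u^2) * e0
  have hweval : aeval (u*u) (X^3 + 4*X - 1 : ℚ[X]) = 0 := by
    simp only [map_add, map_sub, map_mul, map_pow, aeval_X, map_one, map_ofNat]
    linear_combination hw
  have hwint : IsIntegral ℚ (u*u) := IsIntegral.of_finite ℚ _
  have hwmin : minpoly ℚ (u*u) = X^3 + 4*X - 1 :=
    (minpoly.eq_of_irreducible_of_monic cubic_irred hweval (by monicity!)).symm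
  have hdvd3 := minpoly.degree_dvd hwint
  rw [hwmin] at hdvd3
  have hdeg3 : (X^3 + 4*X - 1 : ℚ[X]).natDegree = 3 := by compute_degree!
  rw [hdeg3, ha2.1] at hdvd3
  norm_num at hdvd3
end
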